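/- For n ≥ 0 and k ≥ 1 let b(n,k) denote the number of permutations σ in the nonsimple binary butterfly group B_{2^n} with L(σ) = k (so b(n,k) = 0 for k > 2^n). Then for all n ≥ 0 and all k ≥ 1: b(n+1, k) = b(n,k)² + Σ_{j=1}^{k−1} b(n,j)·(b(n, k−j) + 2·b(n,k)). -/

import Mathlib

/-- Kronecker product of permutations: `(i, r) ↦ (σ i, π r)` under the
row-major identification `Fin (a * b) ≃ Fin a × Fin b`. -/
def permKron {a b : ℕ} (σ : Equiv.Perm (Fin a)) (π : Equiv.Perm (Fin b)) :
    Equiv.Perm (Fin (a * b)) :=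
  finProdFinEquiv.symm.trans ((Equiv.prodCongr σ π).trans finProdFinEquiv)

/-- Direct (block) sum of permutations: `(i, r) ↦ (i, π i r)`. -/
def permBlockSum {a b : ℕ} (π : Fin a → Equiv.Perm (Fin b)) :
    Equiv.Perm (Fin (a * b)) :=
  finProdFinEquiv.symm.trans ((Equiv.prodCongrRight π).trans finProdFinEquiv)

/-- The simple `m`-nary butterfly permutations of `Fin (m ^ n)`:
Kronecker products `τ^{a₁} ⊗ ⋯ ⊗ τ^{aₙ}` of powers of the standard `m`-cycle `τ = finRotate m`. -/
def simpleButterfly (m : ℕ) : (n : ℕ) → Set (Equiv.Perm (Fin (m ^ n)))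
  | 0 => {1}
  | n + 1 =>
    {σ | ∃ (a : ℤ) (π : Equiv.Perm (Fin (m ^ n))), π ∈ simpleButterfly m n ∧
      σ = (finCongr (pow_succ' m n).symm).permCongr (permKron (finRotate m ^ a) π)}

/-- The nonsimple `m`-nary butterfly permutations of `Fin (m ^ n)`:
`B₀ = {1}`, `B_{n+1} = {(τ^a ⊗ id) ∘ (σ₁ ⊕ ⋯ ⊕ σ_m) : σᵢ ∈ B_n}`. -/
def nonsimpleButterfly (m : ℕ) : (n : ℕ) → Set (Equiv.Perm (Fin (m ^ n)))
  | 0 => {1}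
  | n + 1 =>
    {σ | ∃ (a : ℤ) (π : Fin m → Equiv.Perm (Fin (m ^ n))),
      (∀ i, π i ∈ nonsimpleButterfly m n) ∧
      σ = (finCongr (pow_succ' m n).symm).permCongr
        (permKron (finRotate m ^ a) 1 * permBlockSum π)}

/-- The length of the longest increasing subsequence of a permutation. -/
noncomputable def LIS {M : ℕ} (σ : Equiv.Perm (Fin M)) : ℕ :=
  sSup {k | ∃ t : Finset (Fin M), t.card = k ∧ StrictMonoOn (⇑σ) ↑t}

/-- The length of the longest decreasing subsequence of a permutation. -/
noncomputable def LDS {M : ℕ} (σ : Equiv.Perm (Fin M)) : ℕ :=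
  sSup {k | ∃ t : Finset (Fin M), t.card = k ∧ StrictAntiOn (⇑σ) ↑t}

/-- The number of cycles in the disjoint cycle decomposition of `σ`,
counting fixed points as cycles of length 1. -/
def numCycles {M : ℕ} (σ : Equiv.Perm (Fin M)) : ℕ :=
  Multiset.card σ.cycleType + (Finset.univ.filter fun x => σ x = x).card

/-- The number of fixed points of `σ`. -/
def numFixed {M : ℕ} (σ : Equiv.Perm (Fin M)) : ℕ :=
  (Finset.univ.filter fun x => σ x = x).card

/-- `b(n,k)`: the number of nonsimple binary butterfly permutations `σ ∈ B_{2^n}`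
with `L(σ) = k`. -/
noncomputable def bCount (n k : ℕ) : ℕ :=
  {σ | σ ∈ nonsimpleButterfly 2 n ∧ LIS σ = k}.ncard

section LISHelpers
open Equiv Finset

variable {M M' : ℕ}

lemma LIS_set_nonempty (σ : Perm (Fin M)) :
    {k | ∃ t : Finset (Fin M), t.card = k ∧ StrictMonoOn (⇑σ) ↑t}.Nonempty :=
  ⟨0, ∅, by simp, by intro x hx; simp at hx⟩

lemma LIS_set_bddAbove (σ : Perm (Fin M)) :
    BddAbove {k | ∃ t : Finset (Fin M), t.card = k ∧ StrictMonoOn (⇑σ) ↑t} := by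
  refine ⟨M, ?_⟩
  rintro k ⟨t, rfl, -⟩
  simpa using Finset.card_le_univ t

lemma le_LIS (σ : Perm (Fin M)) (t : Finset (Fin M)) (h : StrictMonoOn (⇑σ) ↑t) :
    t.card ≤ LIS σ :=
  le_csSup (LIS_set_bddAbove σ) ⟨t, rfl, h⟩

lemma LIS_le (σ : Perm (Fin M)) {m : ℕ}
    (h : ∀ t : Finset (Fin M), StrictMonoOn (⇑σ) ↑t → t.card ≤ m) : LIS σ ≤ m := by
  refine csSup_le (LIS_set_nonempty σ) ?_
  rintro k ⟨t, rfl, ht⟩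
  exact h t ht

lemma LIS_spec (σ : Perm (Fin M)) :
    ∃ t : Finset (Fin M), t.card = LIS σ ∧ StrictMonoOn (⇑σ) ↑t :=
  Nat.sSup_mem (LIS_set_nonempty σ) (LIS_set_bddAbove σ)

lemma one_le_LIS (hM : 0 < M) (σ : Perm (Fin M)) : 1 ≤ LIS σ := by
  have := le_LIS σ {⟨0, hM⟩} ?_
  · simpa using this
  · intro x hx y hy hxy
    simp only [Finset.coe_singleton, Set.mem_singleton_iff] at hx hy
    subst hx; subst hy; exact absurd hxy (lt_irrefl _)

lemma LIS_le_LIS (σ : Perm (Fin M)) (σ' : Perm (Fin M'))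
    (f g : Fin M → Fin M') (hf : StrictMono f) (hg : StrictMono g)
    (hcomm : ∀ x, σ' (f x) = g (σ x)) : LIS σ ≤ LIS σ' := by
  obtain ⟨t, ht, hm⟩ := LIS_spec σ
  have h2 : StrictMonoOn (⇑σ') ↑(t.map ⟨f, hf.injective⟩) := by
    intro x hx y hy hxy
    simp only [Finset.coe_map, Set.mem_image, Finset.mem_coe,
      Function.Embedding.coeFn_mk] at hx hy
    obtain ⟨u, hu, rfl⟩ := hx; obtain ⟨v, hv, rfl⟩ := hy
    rw [hcomm, hcomm]
    exact hg (hm hu hv (hf.lt_iff_lt.mp hxy))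
  have := le_LIS σ' _ h2
  rwa [Finset.card_map, ht] at this

lemma LIS_congr (h : M = M') (σ : Perm (Fin M)) :
    LIS ((finCongr h).permCongr σ) = LIS σ := by
  have hmono : StrictMono (finCongr h) := fun a b hab => by
    simpa only [Fin.lt_def, finCongr_apply, Fin.coe_cast] using hab
  have hmono' : StrictMono (finCongr h.symm) := fun a b hab => by
    simpa only [Fin.lt_def, finCongr_apply, Fin.coe_cast] using hab
  refine le_antisymm ?_ ?_
  · refine LIS_le_LIS _ σ (finCongr h.symm) (finCongr h.symm) hmono' hmono' fun x => ?_
    simp [Equiv.permCongr_apply]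
  · refine LIS_le_LIS σ _ (finCongr h) (finCongr h) hmono hmono fun x => ?_
    simp [Equiv.permCongr_apply]

end LISHelpers

section Blocks
open Equiv Finset

variable {N : ℕ}

def loE (r : Fin N) : Fin (2 * N) := ⟨r, by have := r.isLt; omega⟩
def hiE (r : Fin N) : Fin (2 * N) := ⟨N + r, by have := r.isLt; omega⟩

lemma loE_strictMono : StrictMono (loE (N := N)) := fun a b hab => by
  simp only [loE, Fin.mk_lt_mk]
  exact Fin.lt_def.mp hab

lemma hiE_strictMono : StrictMono (hiE (N := N)) := fun a b hab => by
  simp only [hiE, Fin.mk_lt_mk]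
  exact Nat.add_lt_add_left (Fin.lt_def.mp hab) N

lemma loE_lt_hiE (r s : Fin N) : loE r < hiE s := by
  have := r.isLt
  simp only [loE, hiE, Fin.mk_lt_mk]
  omega

lemma loE_val (r : Fin N) : (loE r : ℕ) = r := rfl
lemma hiE_val (r : Fin N) : (hiE r : ℕ) = N + r := rfl

variable (hN : 0 < N)

/-- fold back into `Fin N` -/
def dE (hN : 0 < N) (x : Fin (2 * N)) : Fin N := ⟨x % N, Nat.mod_lt _ hN⟩

lemma loE_dE {x : Fin (2 * N)} (hx : (x : ℕ) < N) : loE (dE hN x) = x := by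
  simp only [loE, dE]
  exact Fin.ext (by simp [Nat.mod_eq_of_lt hx])

lemma hiE_dE {x : Fin (2 * N)} (hx : N ≤ (x : ℕ)) : hiE (dE hN x) = x := by
  have h2 := x.isLt
  simp only [hiE, dE]
  refine Fin.ext ?_
  simp only
  have : (x : ℕ) % N = (x : ℕ) - N := by
    rw [Nat.mod_eq_sub_mod hx, Nat.mod_eq_of_lt (by omega)]
  omega

lemma LIS_sum (f : Perm (Fin (2 * N))) (g h : Perm (Fin N))
    (h0 : ∀ r, f (loE r) = loE (g r)) (h1 : ∀ r, f (hiE r) = hiE (h r)) :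
    LIS f = LIS g + LIS h := by
  rcases Nat.eq_zero_or_pos N with rfl | hN
  · -- N = 0 : everything is 0
    have e1 : LIS f = 0 := by
      refine Nat.le_zero.mp (LIS_le f fun t _ => ?_)
      have : t = ∅ := Finset.eq_empty_of_forall_notMem fun x _ => by
        have := x.isLt; omega
      simp [this]
    have e2 : LIS g = 0 := by
      refine Nat.le_zero.mp (LIS_le g fun t _ => ?_)
      have : t = ∅ := Finset.eq_empty_of_forall_notMem fun x _ => (Nat.not_lt_zero _ x.isLt)
      simp [this]
    have e3 : LIS h = 0 := by
      refine Nat.le_zero.mp (LIS_le h fun t _ => ?_)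
      have : t = ∅ := Finset.eq_empty_of_forall_notMem fun x _ => (Nat.not_lt_zero _ x.isLt)
      simp [this]
    simp [e1, e2, e3]
  refine le_antisymm ?_ ?_
  · -- LIS f ≤ LIS g + LIS h
    refine LIS_le f fun t hm => ?_
    set t₁ : Finset (Fin N) := (t.filter fun x : Fin (2 * N) => (x : ℕ) < N).image (dE hN) with ht₁
    set t₂ : Finset (Fin N) := (t.filter fun x : Fin (2 * N) => ¬ (x : ℕ) < N).image (dE hN) with ht₂
    have hinj1 : Set.InjOn (dE hN) ↑(t.filter fun x : Fin (2 * N) => (x : ℕ) < N) := by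
      intro x hx y hy hxy
      simp only [Finset.coe_filter, Set.mem_setOf_eq] at hx hy
      rw [← loE_dE hN hx.2, ← loE_dE hN hy.2, hxy]
    have hinj2 : Set.InjOn (dE hN) ↑(t.filter fun x : Fin (2 * N) => ¬ (x : ℕ) < N) := by
      intro x hx y hy hxy
      simp only [Finset.coe_filter, Set.mem_setOf_eq] at hx hy
      rw [← hiE_dE hN (le_of_not_gt hx.2), ← hiE_dE hN (le_of_not_gt hy.2), hxy]
    have hc1 : t₁.card = (t.filter fun x : Fin (2 * N) => (x : ℕ) < N).card :=
      Finset.card_image_of_injOn hinj1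
    have hc2 : t₂.card = (t.filter fun x : Fin (2 * N) => ¬ (x : ℕ) < N).card :=
      Finset.card_image_of_injOn hinj2
    have hm1 : StrictMonoOn (⇑g) ↑t₁ := by
      intro u hu v hv huv
      simp only [ht₁, Finset.coe_image, Set.mem_image, Finset.coe_filter,
        Set.mem_setOf_eq] at hu hv
      obtain ⟨x, ⟨hxt, hxlt⟩, rfl⟩ := hu
      obtain ⟨y, ⟨hyt, hylt⟩, rfl⟩ := hv
      have hxy : x < y := by
        have := loE_strictMono huv
        rwa [loE_dE hN hxlt, loE_dE hN hylt] at this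
      have hfxy := hm hxt hyt hxy
      rw [← loE_dE hN hxlt, ← loE_dE hN hylt, h0, h0] at hfxy
      exact loE_strictMono.lt_iff_lt.mp hfxy
    have hm2 : StrictMonoOn (⇑h) ↑t₂ := by
      intro u hu v hv huv
      simp only [ht₂, Finset.coe_image, Set.mem_image, Finset.coe_filter,
        Set.mem_setOf_eq] at hu hv
      obtain ⟨x, ⟨hxt, hxlt⟩, rfl⟩ := hu
      obtain ⟨y, ⟨hyt, hylt⟩, rfl⟩ := hv
      have hxy : x < y := by
        have := hiE_strictMono huv
        rwa [hiE_dE hN (le_of_not_gt hxlt), hiE_dE hN (le_of_not_gt hylt)] at this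
      have hfxy := hm hxt hyt hxy
      rw [← hiE_dE hN (le_of_not_gt hxlt), ← hiE_dE hN (le_of_not_gt hylt), h1, h1] at hfxy
      exact hiE_strictMono.lt_iff_lt.mp hfxy
    calc t.card = (t.filter fun x : Fin (2 * N) => (x : ℕ) < N).card
        + (t.filter fun x : Fin (2 * N) => ¬ (x : ℕ) < N).card :=
          (Finset.card_filter_add_card_filter_not _).symm
      _ = t₁.card + t₂.card := by rw [hc1, hc2]
      _ ≤ LIS g + LIS h := Nat.add_le_add (le_LIS g t₁ hm1) (le_LIS h t₂ hm2)
  · -- LIS g + LIS h ≤ LIS f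
    obtain ⟨t₁, hc1, hm1⟩ := LIS_spec g
    obtain ⟨t₂, hc2, hm2⟩ := LIS_spec h
    set u : Finset (Fin (2 * N)) :=
      t₁.map ⟨loE, loE_strictMono.injective⟩ ∪ t₂.map ⟨hiE, hiE_strictMono.injective⟩ with hu
    have hdisj : Disjoint (t₁.map ⟨loE, loE_strictMono.injective⟩)
        (t₂.map ⟨hiE, hiE_strictMono.injective⟩) := by
      rw [Finset.disjoint_left]
      rintro x hx hy
      simp only [Finset.mem_map, Function.Embedding.coeFn_mk] at hx hy
      obtain ⟨a, -, rfl⟩ := hx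
      obtain ⟨b, -, hb⟩ := hy
      have := a.isLt
      have : (hiE b : ℕ) = (loE a : ℕ) := by rw [hb]
      rw [hiE_val, loE_val] at this
      have := b.isLt; omega
    have hmono : StrictMonoOn (⇑f) ↑u := by
      intro x hx y hy hxy
      simp only [hu, Finset.coe_union, Set.mem_union, Finset.coe_map, Set.mem_image,
        Finset.mem_coe, Function.Embedding.coeFn_mk] at hx hy
      rcases hx with ⟨a, ha, rfl⟩ | ⟨a, ha, rfl⟩ <;> rcases hy with ⟨b, hb, rfl⟩ | ⟨b, hb, rfl⟩
      · rw [h0, h0]; exact loE_strictMono (hm1 ha hb (loE_strictMono.lt_iff_lt.mp hxy))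
      · rw [h0, h1]; exact loE_lt_hiE _ _
      · exact absurd hxy (not_lt.mpr (le_of_lt (loE_lt_hiE b a)))
      · rw [h1, h1]; exact hiE_strictMono (hm2 ha hb (hiE_strictMono.lt_iff_lt.mp hxy))
    have := le_LIS f u hmono
    rwa [hu, Finset.card_union_of_disjoint hdisj, Finset.card_map, Finset.card_map,
      hc1, hc2] at this

lemma LIS_swap_blocks (hN : 0 < N) (f : Perm (Fin (2 * N))) (g h : Perm (Fin N))
    (h0 : ∀ r, f (loE r) = hiE (g r)) (h1 : ∀ r, f (hiE r) = loE (h r)) :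
    LIS f = max (LIS g) (LIS h) := by
  refine le_antisymm ?_ ?_
  · refine LIS_le f fun t hm => ?_
    by_cases hcase : ∀ x ∈ t, (x : ℕ) < N
    · -- all in low block
      have hinj : Set.InjOn (dE hN) ↑t := by
        intro x hx y hy hxy
        rw [← loE_dE hN (hcase x hx), ← loE_dE hN (hcase y hy), hxy]
      have hmono : StrictMonoOn (⇑g) ↑(t.image (dE hN)) := by
        intro u hu v hv huv
        simp only [Finset.coe_image, Set.mem_image, Finset.mem_coe] at hu hv
        obtain ⟨x, hxt, rfl⟩ := hu
        obtain ⟨y, hyt, rfl⟩ := hv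
        have hxy : x < y := by
          have := loE_strictMono huv
          rwa [loE_dE hN (hcase x hxt), loE_dE hN (hcase y hyt)] at this
        have hfxy := hm hxt hyt hxy
        rw [← loE_dE hN (hcase x hxt), ← loE_dE hN (hcase y hyt), h0, h0] at hfxy
        exact hiE_strictMono.lt_iff_lt.mp hfxy
      have := le_LIS g _ hmono
      rw [Finset.card_image_of_injOn hinj] at this
      exact this.trans (le_max_left _ _)
    · -- some element in high block ⇒ all in high block
      push_neg at hcase
      obtain ⟨y₀, hy₀t, hy₀⟩ := hcase
      have hall : ∀ x ∈ t, N ≤ (x : ℕ) := by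
        intro x hxt
        by_contra hxlt
        push_neg at hxlt
        have hxy : x < y₀ := by
          rw [Fin.lt_def]; omega
        have hfxy := hm hxt hy₀t hxy
        rw [← loE_dE hN hxlt, ← hiE_dE hN hy₀, h0, h1] at hfxy
        exact absurd hfxy (not_lt.mpr (le_of_lt (loE_lt_hiE _ _)))
      have hinj : Set.InjOn (dE hN) ↑t := by
        intro x hx y hy hxy
        rw [← hiE_dE hN (hall x hx), ← hiE_dE hN (hall y hy), hxy]
      have hmono : StrictMonoOn (⇑h) ↑(t.image (dE hN)) := by
        intro u hu v hv huv
        simp only [Finset.coe_image, Set.mem_image, Finset.mem_coe] at hu hv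
        obtain ⟨x, hxt, rfl⟩ := hu
        obtain ⟨y, hyt, rfl⟩ := hv
        have hxy : x < y := by
          have := hiE_strictMono huv
          rwa [hiE_dE hN (hall x hxt), hiE_dE hN (hall y hyt)] at this
        have hfxy := hm hxt hyt hxy
        rw [← hiE_dE hN (hall x hxt), ← hiE_dE hN (hall y hyt), h1, h1] at hfxy
        exact loE_strictMono.lt_iff_lt.mp hfxy
      have := le_LIS h _ hmono
      rw [Finset.card_image_of_injOn hinj] at this
      exact this.trans (le_max_right _ _)
  · -- max ≤ LIS f
    rw [max_le_iff]
    constructor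
    · refine LIS_le_LIS g f loE hiE loE_strictMono hiE_strictMono fun x => ?_
      exact h0 x
    · refine LIS_le_LIS h f hiE loE hiE_strictMono loE_strictMono fun x => ?_
      exact h1 x

end Blocks

section Concrete
open Equiv Finset

lemma e_zero {N : ℕ} (r : Fin N) : finProdFinEquiv ((0 : Fin 2), r) = loE r := by
  refine Fin.ext ?_
  simp [loE, finProdFinEquiv]

lemma e_one {N : ℕ} (r : Fin N) : finProdFinEquiv ((1 : Fin 2), r) = hiE r := by
  refine Fin.ext ?_
  simp [hiE, finProdFinEquiv]
  omega

lemma kron_blockSum_apply {N : ℕ} (ρ : Equiv.Perm (Fin 2)) (π : Fin 2 → Equiv.Perm (Fin N))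
    (i : Fin 2) (r : Fin N) :
    ((permKron ρ 1 * permBlockSum π : Equiv.Perm (Fin (2 * N))))
        (finProdFinEquiv (i, r)) = finProdFinEquiv (ρ i, π i r) := by
  simp [permKron, permBlockSum, Equiv.Perm.mul_apply, Equiv.prodCongrRight]

/-- the parametrization map -/
def Phi (n : ℕ) (ε : Fin 2) (π : Fin 2 → Equiv.Perm (Fin (2 ^ n))) :
    Equiv.Perm (Fin (2 ^ (n + 1))) :=
  (finCongr (pow_succ' 2 n).symm).permCongr
    (permKron (finRotate 2 ^ (ε : ℕ)) 1 * permBlockSum π)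

lemma zpow_finRotate_two (a : ℤ) :
    finRotate 2 ^ a = 1 ∨ finRotate 2 ^ a = finRotate 2 := by
  have hsq : finRotate 2 ^ (2 : ℤ) = 1 := by
    rw [show (2:ℤ) = ((2:ℕ):ℤ) by norm_num, zpow_natCast]
    decide
  rcases Int.even_or_odd a with ⟨b, hb⟩ | ⟨b, hb⟩
  · left
    rw [show a = 2 * b by omega, zpow_mul, hsq, one_zpow]
  · right
    rw [show a = 2 * b + 1 by omega, zpow_add, zpow_mul, hsq, one_zpow, zpow_one, one_mul]

lemma mem_succ_iff {n : ℕ} (σ : Equiv.Perm (Fin (2 ^ (n + 1)))) :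
    σ ∈ nonsimpleButterfly 2 (n + 1) ↔
      ∃ p : Fin 2 × (Fin 2 → Equiv.Perm (Fin (2 ^ n))),
        (∀ i, p.2 i ∈ nonsimpleButterfly 2 n) ∧ σ = Phi n p.1 p.2 := by
  constructor
  · rintro ⟨a, π, hπ, rfl⟩
    rcases zpow_finRotate_two a with h | h
    · exact ⟨((0 : Fin 2), π), hπ, by simp only [Phi, h]; norm_num⟩
    · exact ⟨((1 : Fin 2), π), hπ, by simp only [Phi, h]; norm_num⟩
  · rintro ⟨⟨ε, π⟩, hπ, rfl⟩
    exact ⟨((ε : ℕ) : ℤ), π, hπ, by simp only [Phi, zpow_natCast]⟩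

lemma Phi_injective (n : ℕ) :
    Function.Injective (fun p : Fin 2 × (Fin 2 → Equiv.Perm (Fin (2 ^ n))) =>
      Phi n p.1 p.2) := by
  have hN : 0 < 2 ^ n := Nat.pow_pos (by norm_num)
  rintro ⟨ε, π⟩ ⟨ε', π'⟩ hEq
  simp only [Phi] at hEq
  have h2 := (Equiv.permCongr (finCongr (pow_succ' 2 n).symm)).injective hEq
  have key : ∀ (i : Fin 2) (r : Fin (2 ^ n)),
      ((finRotate 2 ^ (ε : ℕ)) i, π i r) = ((finRotate 2 ^ (ε' : ℕ)) i, π' i r) := by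
    intro i r
    have := Equiv.ext_iff.mp h2 (finProdFinEquiv (i, r))
    rw [kron_blockSum_apply, kron_blockSum_apply] at this
    exact finProdFinEquiv.injective this
  have hε : ε = ε' := by
    have h0' : (finRotate 2 ^ (ε : ℕ)) 0 = (finRotate 2 ^ (ε' : ℕ)) 0 :=
      (Prod.ext_iff.mp (key 0 ⟨0, hN⟩)).1
    fin_cases ε <;> fin_cases ε' <;> revert h0' <;> decide
  have hπ : π = π' := funext fun i => Equiv.ext fun r => (Prod.ext_iff.mp (key i r)).2
  exact Prod.ext hε hπ

lemma LIS_Phi_zero (n : ℕ) (π : Fin 2 → Equiv.Perm (Fin (2 ^ n))) :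
    LIS (Phi n 0 π) = LIS (π 0) + LIS (π 1) := by
  have h00 : (finRotate 2 ^ ((0 : Fin 2) : ℕ)) (0 : Fin 2) = 0 := by decide
  have h01 : (finRotate 2 ^ ((0 : Fin 2) : ℕ)) (1 : Fin 2) = 1 := by decide
  rw [Phi, LIS_congr]
  refine LIS_sum _ (π 0) (π 1) (fun r => ?_) (fun r => ?_)
  · rw [← e_zero, ← e_zero, kron_blockSum_apply, h00]
  · rw [← e_one, ← e_one, kron_blockSum_apply, h01]

lemma LIS_Phi_one (n : ℕ) (π : Fin 2 → Equiv.Perm (Fin (2 ^ n))) :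
    LIS (Phi n 1 π) = max (LIS (π 0)) (LIS (π 1)) := by
  have hN : 0 < 2 ^ n := Nat.pow_pos (by norm_num)
  have h10 : (finRotate 2 ^ ((1 : Fin 2) : ℕ)) (0 : Fin 2) = 1 := by decide
  have h11 : (finRotate 2 ^ ((1 : Fin 2) : ℕ)) (1 : Fin 2) = 0 := by decide
  rw [Phi, LIS_congr]
  refine LIS_swap_blocks hN _ (π 0) (π 1) (fun r => ?_) (fun r => ?_)
  · rw [← e_zero, ← e_one, kron_blockSum_apply, h10]
  · rw [← e_one, ← e_zero, kron_blockSum_apply, h11]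

end Concrete

section Counting
open Equiv Finset

open Classical in
noncomputable def bFin (n k : ℕ) : Finset (Equiv.Perm (Fin (2 ^ n))) :=
  Finset.univ.filter fun σ => σ ∈ nonsimpleButterfly 2 n ∧ LIS σ = k

lemma bCount_eq_card (n k : ℕ) : bCount n k = (bFin n k).card := by
  rw [bCount, ← Set.ncard_coe_finset]
  congr 1
  ext σ
  simp [bFin]

open Classical in
noncomputable def DFin (n k : ℕ) : Finset (Fin 2 × (Fin 2 → Equiv.Perm (Fin (2 ^ n)))) :=
  Finset.univ.filter fun p =>
    (∀ i, p.2 i ∈ nonsimpleButterfly 2 n) ∧ LIS (Phi n p.1 p.2) = k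

lemma bFin_succ_eq_image (n k : ℕ) :
    bFin (n + 1) k = (DFin n k).image (fun p => Phi n p.1 p.2) := by
  classical
  ext σ
  simp only [bFin, DFin, Finset.mem_filter, Finset.mem_image, Finset.mem_univ, true_and,
    mem_succ_iff]
  constructor
  · rintro ⟨⟨p, hp, rfl⟩, hL⟩
    exact ⟨p, ⟨hp, hL⟩, rfl⟩
  · rintro ⟨p, ⟨hp, hL⟩, rfl⟩
    exact ⟨⟨p, hp, rfl⟩, hL⟩

open Classical in
noncomputable def EFin0 (n k : ℕ) :
    Finset (Equiv.Perm (Fin (2 ^ n)) × Equiv.Perm (Fin (2 ^ n))) :=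
  Finset.univ.filter fun q => q.1 ∈ nonsimpleButterfly 2 n ∧ q.2 ∈ nonsimpleButterfly 2 n ∧
    LIS q.1 + LIS q.2 = k

open Classical in
noncomputable def EFin1 (n k : ℕ) :
    Finset (Equiv.Perm (Fin (2 ^ n)) × Equiv.Perm (Fin (2 ^ n))) :=
  Finset.univ.filter fun q => q.1 ∈ nonsimpleButterfly 2 n ∧ q.2 ∈ nonsimpleButterfly 2 n ∧
    max (LIS q.1) (LIS q.2) = k

lemma pair_eta (π : Fin 2 → Equiv.Perm (Fin (2 ^ n))) : ![π 0, π 1] = π := by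
  funext i
  fin_cases i <;> simp

lemma card_DFin0 (n k : ℕ) :
    ((DFin n k).filter (fun p => p.1 = 0)).card = (EFin0 n k).card := by
  classical
  refine Finset.card_bij' (fun p _ => (p.2 0, p.2 1))
    (fun q _ => ((0 : Fin 2), ![q.1, q.2])) ?_ ?_ ?_ ?_
  · rintro ⟨ε, π⟩ hp
    simp only [DFin, Finset.mem_filter, Finset.mem_univ, true_and] at hp
    obtain ⟨⟨hmem, hL⟩, hε⟩ := hp
    subst hε
    rw [LIS_Phi_zero] at hL
    simp only [EFin0, Finset.mem_filter, Finset.mem_univ, true_and]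
    exact ⟨hmem 0, hmem 1, hL⟩
  · rintro ⟨σ₁, σ₂⟩ hq
    simp only [EFin0, Finset.mem_filter, Finset.mem_univ, true_and] at hq
    obtain ⟨h1, h2, hL⟩ := hq
    simp only [DFin, Finset.mem_filter, Finset.mem_univ, true_and]
    refine ⟨⟨fun i => ?_, ?_⟩, trivial⟩
    · fin_cases i <;> simpa
    · rw [LIS_Phi_zero]
      simpa using hL
  · rintro ⟨ε, π⟩ hp
    simp only [DFin, Finset.mem_filter, Finset.mem_univ, true_and] at hp
    obtain ⟨-, hε⟩ := hp
    subst hε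
    simp [pair_eta π]
  · rintro ⟨σ₁, σ₂⟩ _
    simp

lemma card_DFin1 (n k : ℕ) :
    ((DFin n k).filter (fun p => p.1 = 1)).card = (EFin1 n k).card := by
  classical
  refine Finset.card_bij' (fun p _ => (p.2 0, p.2 1))
    (fun q _ => ((1 : Fin 2), ![q.1, q.2])) ?_ ?_ ?_ ?_
  · rintro ⟨ε, π⟩ hp
    simp only [DFin, Finset.mem_filter, Finset.mem_univ, true_and] at hp
    obtain ⟨⟨hmem, hL⟩, hε⟩ := hp
    subst hε
    rw [LIS_Phi_one] at hL
    simp only [EFin1, Finset.mem_filter, Finset.mem_univ, true_and]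
    exact ⟨hmem 0, hmem 1, hL⟩
  · rintro ⟨σ₁, σ₂⟩ hq
    simp only [EFin1, Finset.mem_filter, Finset.mem_univ, true_and] at hq
    obtain ⟨h1, h2, hL⟩ := hq
    simp only [DFin, Finset.mem_filter, Finset.mem_univ, true_and]
    refine ⟨⟨fun i => ?_, ?_⟩, trivial⟩
    · fin_cases i <;> simpa
    · rw [LIS_Phi_one]
      simpa using hL
  · rintro ⟨ε, π⟩ hp
    simp only [DFin, Finset.mem_filter, Finset.mem_univ, true_and] at hp
    obtain ⟨-, hε⟩ := hp
    subst hε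
    simp [pair_eta π]
  · rintro ⟨σ₁, σ₂⟩ _
    simp

lemma card_EFin0 (n k : ℕ) (hk : 1 ≤ k) :
    (EFin0 n k).card = ∑ j ∈ Finset.Ico 1 k, (bFin n j).card * (bFin n (k - j)).card := by
  classical
  have hN : 0 < 2 ^ n := Nat.pow_pos (by norm_num)
  have hdecomp : EFin0 n k = (Finset.Ico 1 k).biUnion
      (fun j => bFin n j ×ˢ bFin n (k - j)) := by
    ext q
    simp only [EFin0, bFin, Finset.mem_filter, Finset.mem_univ, true_and,
      Finset.mem_biUnion, Finset.mem_Ico, Finset.mem_product]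
    constructor
    · rintro ⟨h1, h2, h3⟩
      have ha := one_le_LIS hN q.1
      have hb := one_le_LIS hN q.2
      exact ⟨LIS q.1, ⟨ha, by omega⟩, ⟨h1, rfl⟩, h2, by omega⟩
    · rintro ⟨j, ⟨hj1, hj2⟩, ⟨hq1, hL1⟩, hq2, hL2⟩
      exact ⟨hq1, hq2, by omega⟩
  rw [hdecomp, Finset.card_biUnion]
  · exact Finset.sum_congr rfl fun j _ => Finset.card_product _ _
  · intro j hj j' hj' hne
    simp only [Finset.disjoint_left]
    rintro q hq hq'
    simp only [bFin, Finset.mem_product, Finset.mem_filter] at hq hq'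
    exact hne (hq.1.2.2 ▸ hq'.1.2.2 ▸ rfl)

lemma card_EFin1 (n k : ℕ) (hk : 1 ≤ k) :
    (EFin1 n k).card = (bFin n k).card ^ 2 +
      (∑ j ∈ Finset.Ico 1 k, (bFin n j).card) * (2 * (bFin n k).card) := by
  classical
  have hN : 0 < 2 ^ n := Nat.pow_pos (by norm_num)
  set bLt : Finset (Equiv.Perm (Fin (2 ^ n))) :=
    Finset.univ.filter (fun σ => σ ∈ nonsimpleButterfly 2 n ∧ LIS σ < k) with hbLt
  have hLt_card : bLt.card = ∑ j ∈ Finset.Ico 1 k, (bFin n j).card := by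
    have : bLt = (Finset.Ico 1 k).biUnion (bFin n) := by
      ext σ
      simp only [hbLt, bFin, Finset.mem_filter, Finset.mem_univ, true_and,
        Finset.mem_biUnion, Finset.mem_Ico]
      constructor
      · rintro ⟨h1, h2⟩
        exact ⟨LIS σ, ⟨one_le_LIS hN σ, h2⟩, h1, rfl⟩
      · rintro ⟨j, ⟨hj1, hj2⟩, hσ, rfl⟩
        exact ⟨hσ, hj2⟩
    rw [this, Finset.card_biUnion]
    intro j hj j' hj' hne
    simp only [Finset.disjoint_left]
    rintro σ hσ hσ'
    simp only [bFin, Finset.mem_filter] at hσ hσ'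
    exact hne (hσ.2.2 ▸ hσ'.2.2 ▸ rfl)
  have hdecomp : EFin1 n k =
      (bFin n k ×ˢ (bFin n k ∪ bLt)) ∪ (bLt ×ˢ bFin n k) := by
    ext q
    simp only [EFin1, bFin, hbLt, Finset.mem_filter, Finset.mem_univ, true_and,
      Finset.mem_union, Finset.mem_product]
    constructor
    · rintro ⟨h1, h2, h3⟩
      rcases Nat.lt_or_ge (LIS q.1) k with hlt | hge
      · right
        refine ⟨⟨h1, hlt⟩, h2, ?_⟩
        omega
      · left
        have hL1 : LIS q.1 = k := by omega
        refine ⟨⟨h1, hL1⟩, ?_⟩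
        rcases Nat.lt_or_ge (LIS q.2) k with hlt2 | hge2
        · exact Or.inr ⟨h2, hlt2⟩
        · exact Or.inl ⟨h2, by omega⟩
    · rintro (⟨⟨h1, hL1⟩, (⟨h2, hL2⟩ | ⟨h2, hL2⟩)⟩ | ⟨⟨h1, hL1⟩, h2, hL2⟩)
      · exact ⟨h1, h2, by omega⟩
      · exact ⟨h1, h2, by omega⟩
      · exact ⟨h1, h2, by omega⟩
  have hdisj_kLt : Disjoint (bFin n k) bLt := by
    simp only [Finset.disjoint_left]
    rintro σ hσ hσ'
    simp only [bFin, hbLt, Finset.mem_filter] at hσ hσ'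
    omega
  have hdisj : Disjoint (bFin n k ×ˢ (bFin n k ∪ bLt)) (bLt ×ˢ bFin n k) := by
    simp only [Finset.disjoint_left]
    rintro q hq hq'
    simp only [Finset.mem_product] at hq hq'
    exact (Finset.disjoint_left.mp hdisj_kLt) hq.1 hq'.1
  rw [hdecomp, Finset.card_union_of_disjoint hdisj, Finset.card_product,
    Finset.card_product, Finset.card_union_of_disjoint hdisj_kLt, hLt_card]
  ring

end Counting

/-- The recursion `b(n+1,k) = b(n,k)² + Σ_{j=1}^{k−1} b(n,j)·(b(n,k−j) + 2·b(n,k))`. -/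
theorem bCount_recursion (n k : ℕ) (hk : 1 ≤ k) :
    bCount (n + 1) k =
      bCount n k ^ 2 +
        ∑ j ∈ Finset.Ico 1 k, bCount n j * (bCount n (k - j) + 2 * bCount n k) := by
  classical
  have hsplit : (DFin n k).card =
      ((DFin n k).filter (fun p => p.1 = 0)).card +
      ((DFin n k).filter (fun p => p.1 = 1)).card := by
    rw [← Finset.card_filter_add_card_filter_not (s := DFin n k)
      (p := fun p => p.1 = 0)]
    congr 1
    apply Finset.card_nbij id
    · intro p hp
      simp only [Finset.mem_filter, Finset.mem_coe] at *
      have : ∀ i : Fin 2, ¬i = 0 ↔ i = 1 := by decide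
      exact ⟨hp.1, (this p.1).mp hp.2⟩
    · intro p hp q hq h
      exact h
    · intro p hp
      simp only [Finset.coe_filter, Set.mem_setOf_eq, Set.mem_image] at *
      have : ∀ i : Fin 2, ¬i = 0 ↔ i = 1 := by decide
      exact ⟨p, ⟨hp.1, (this p.1).mpr hp.2⟩, rfl⟩
  have hcard : bCount (n + 1) k = (DFin n k).card := by
    rw [bCount_eq_card, bFin_succ_eq_image,
      Finset.card_image_of_injective _ (Phi_injective n)]
  rw [hcard, hsplit, card_DFin0, card_DFin1, card_EFin0 n k hk, card_EFin1 n k hk]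
  simp only [bCount_eq_card]
  rw [Finset.sum_congr rfl (fun j _ => mul_add (bFin n j).card ((bFin n (k-j)).card)
    (2 * (bFin n k).card)), Finset.sum_add_distrib, ← Finset.sum_mul]
  ring
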